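/- Set p₁ = 2+√3, p₂ = 2−√3, p₃ = √2+1, p₄ = √2−1, p₅ = 1. Then for every complex t with (1+t²)(1+6t²+t⁴)(1+14t²+t⁴) ≠ 0: a₁(t) = (1/24)·(p₁t/(1+(p₁t)²) + p₂t/(1+(p₂t)²)) + (√2/8)·(p₃t/(1+(p₃t)²) + p₄t/(1+(p₄t)²)) + (1/3)·t/(1+t²); a₅(t) = (1/24)·(p₁t/(1+(p₁t)²) + p₂t/(1+(p₂t)²)) − (√2/8)·(p₃t/(1+(p₃t)²) + p₄t/(1+(p₄t)²)) + (1/3)·t/(1+t²); a₃(t) = (1/24)·(p₁t/(1+(p₁t)²) + p₂t/(1+(p₂t)²)) − (1/6)·t/(1+t²). (Note p₁p₂ = p₃p₄ = 1.) -/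

import Mathlib

open scoped BigOperators

/-- Coefficient `a₁(t)` for complex `t`. -/
noncomputable def a1C (t : ℂ) : ℂ :=
  t * (1 + 16 * t ^ 2 + 46 * t ^ 4 + 16 * t ^ 6 + t ^ 8) /
    ((1 + t ^ 2) * (1 + 6 * t ^ 2 + t ^ 4) * (1 + 14 * t ^ 2 + t ^ 4))

/-- Coefficient `a₃(t)` for complex `t`. -/
noncomputable def a3C (t : ℂ) : ℂ :=
  -2 * t ^ 3 / ((1 + t ^ 2) * (1 + 14 * t ^ 2 + t ^ 4))

/-- Coefficient `a₅(t)` for complex `t`. -/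
noncomputable def a5C (t : ℂ) : ℂ :=
  16 * t ^ 5 / ((1 + t ^ 2) * (1 + 6 * t ^ 2 + t ^ 4) * (1 + 14 * t ^ 2 + t ^ 4))

/-- partial-fraction expansions of `a₁`, `a₃`, `a₅`, with
`p₁ = 2+√3`, `p₂ = 2−√3`, `p₃ = √2+1`, `p₄ = √2−1`, `p₅ = 1`
(note `p₁p₂ = p₃p₄ = 1`). -/
theorem partial_fraction_expansions (t : ℂ)
    (hD : (1 + t ^ 2) * (1 + 6 * t ^ 2 + t ^ 4) * (1 + 14 * t ^ 2 + t ^ 4) ≠ 0) :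
    (((2 + Real.sqrt 3 : ℝ) : ℂ) * ((2 - Real.sqrt 3 : ℝ) : ℂ) = 1 ∧
      ((Real.sqrt 2 + 1 : ℝ) : ℂ) * ((Real.sqrt 2 - 1 : ℝ) : ℂ) = 1) ∧
    a1C t =
      (1 / 24) * (((2 + Real.sqrt 3 : ℝ) : ℂ) * t / (1 + (((2 + Real.sqrt 3 : ℝ) : ℂ) * t) ^ 2) +
          ((2 - Real.sqrt 3 : ℝ) : ℂ) * t / (1 + (((2 - Real.sqrt 3 : ℝ) : ℂ) * t) ^ 2)) +
        ((Real.sqrt 2 : ℝ) : ℂ) / 8 *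
          (((Real.sqrt 2 + 1 : ℝ) : ℂ) * t / (1 + (((Real.sqrt 2 + 1 : ℝ) : ℂ) * t) ^ 2) +
            ((Real.sqrt 2 - 1 : ℝ) : ℂ) * t / (1 + (((Real.sqrt 2 - 1 : ℝ) : ℂ) * t) ^ 2)) +
        (1 / 3) * (t / (1 + t ^ 2)) ∧
    a5C t =
      (1 / 24) * (((2 + Real.sqrt 3 : ℝ) : ℂ) * t / (1 + (((2 + Real.sqrt 3 : ℝ) : ℂ) * t) ^ 2) +
          ((2 - Real.sqrt 3 : ℝ) : ℂ) * t / (1 + (((2 - Real.sqrt 3 : ℝ) : ℂ) * t) ^ 2)) -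
        ((Real.sqrt 2 : ℝ) : ℂ) / 8 *
          (((Real.sqrt 2 + 1 : ℝ) : ℂ) * t / (1 + (((Real.sqrt 2 + 1 : ℝ) : ℂ) * t) ^ 2) +
            ((Real.sqrt 2 - 1 : ℝ) : ℂ) * t / (1 + (((Real.sqrt 2 - 1 : ℝ) : ℂ) * t) ^ 2)) +
        (1 / 3) * (t / (1 + t ^ 2)) ∧
    a3C t =
      (1 / 24) * (((2 + Real.sqrt 3 : ℝ) : ℂ) * t / (1 + (((2 + Real.sqrt 3 : ℝ) : ℂ) * t) ^ 2) +
          ((2 - Real.sqrt 3 : ℝ) : ℂ) * t / (1 + (((2 - Real.sqrt 3 : ℝ) : ℂ) * t) ^ 2)) -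
        (1 / 6) * (t / (1 + t ^ 2)) := by
  have h1 : (1 + t ^ 2) ≠ 0 := fun h => hD (by rw [h]; ring)
  have h2 : (1 + 6 * t ^ 2 + t ^ 4) ≠ 0 := fun h => hD (by rw [h]; ring)
  have h3 : (1 + 14 * t ^ 2 + t ^ 4) ≠ 0 := fun h => hD (by rw [h]; ring)
  set a : ℂ := ((Real.sqrt 3 : ℝ) : ℂ) with ha_def
  set b : ℂ := ((Real.sqrt 2 : ℝ) : ℂ) with hb_def
  have ha : a ^ 2 = 3 := by
    rw [ha_def]
    norm_cast
    rw [Real.sq_sqrt (by norm_num : (3:ℝ) ≥ 0)]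
  have hb : b ^ 2 = 2 := by
    rw [hb_def]
    norm_cast
    rw [Real.sq_sqrt (by norm_num : (2:ℝ) ≥ 0)]
  have cast1 : ((2 + Real.sqrt 3 : ℝ) : ℂ) = 2 + a := by push_cast [ha_def]; ring
  have cast2 : ((2 - Real.sqrt 3 : ℝ) : ℂ) = 2 - a := by push_cast [ha_def]; ring
  have cast3 : ((Real.sqrt 2 + 1 : ℝ) : ℂ) = b + 1 := by push_cast [hb_def]; ring
  have cast4 : ((Real.sqrt 2 - 1 : ℝ) : ℂ) = b - 1 := by push_cast [hb_def]; ring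
  rw [cast1, cast2, cast3, cast4]
  -- products of the quadratic factors
  have e1 : (1 + ((2 + a) * t) ^ 2) * (1 + ((2 - a) * t) ^ 2) = 1 + 14 * t ^ 2 + t ^ 4 := by
    linear_combination (2 * t ^ 2 + (a ^ 2 - 5) * t ^ 4) * ha
  have e2 : (1 + ((b + 1) * t) ^ 2) * (1 + ((b - 1) * t) ^ 2) = 1 + 6 * t ^ 2 + t ^ 4 := by
    linear_combination (2 * t ^ 2 + b ^ 2 * t ^ 4) * hb
  have hA : (1 + ((2 + a) * t) ^ 2) ≠ 0 := fun h => h3 (by rw [← e1, h]; ring)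
  have hB : (1 + ((2 - a) * t) ^ 2) ≠ 0 := fun h => h3 (by rw [← e1, h]; ring)
  have hC : (1 + ((b + 1) * t) ^ 2) ≠ 0 := fun h => h2 (by rw [← e2, h]; ring)
  have hE : (1 + ((b - 1) * t) ^ 2) ≠ 0 := fun h => h2 (by rw [← e2, h]; ring)
  have sum1 : (2 + a) * t / (1 + ((2 + a) * t) ^ 2) + (2 - a) * t / (1 + ((2 - a) * t) ^ 2)
      = 4 * t * (1 + t ^ 2) / (1 + 14 * t ^ 2 + t ^ 4) := by
    rw [div_add_div _ _ hA hB, e1]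
    congr 1
    linear_combination (-4 * t ^ 3) * ha
  have sum2 : b / 8 * ((b + 1) * t / (1 + ((b + 1) * t) ^ 2) + (b - 1) * t / (1 + ((b - 1) * t) ^ 2))
      = t * (1 + t ^ 2) / (2 * (1 + 6 * t ^ 2 + t ^ 4)) := by
    rw [div_add_div _ _ hC hE, e2, div_mul_div_comm,
      div_eq_div_iff (mul_ne_zero (by norm_num) h2) (mul_ne_zero two_ne_zero h2)]
    linear_combination (2 * (1 + 6 * t ^ 2 + t ^ 4) * (2 * t + 2 * t ^ 3 * (b ^ 2 + 1))) * hb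
  rw [sum1, sum2]
  refine ⟨⟨by linear_combination -ha, by linear_combination hb⟩, ?_, ?_, ?_⟩
  · rw [a1C]; field_simp [show (1 + t ^ 2 * 6 + t ^ 4) ≠ 0 by ring_nf at h2 ⊢; exact h2, show (1 + t ^ 2 * 14 + t ^ 4) ≠ 0 by ring_nf at h3 ⊢; exact h3]; ring
  · rw [a5C]; field_simp [show (1 + t ^ 2 * 6 + t ^ 4) ≠ 0 by ring_nf at h2 ⊢; exact h2, show (1 + t ^ 2 * 14 + t ^ 4) ≠ 0 by ring_nf at h3 ⊢; exact h3]; ring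
  · rw [a3C]; field_simp [show (1 + t ^ 2 * 6 + t ^ 4) ≠ 0 by ring_nf at h2 ⊢; exact h2, show (1 + t ^ 2 * 14 + t ^ 4) ≠ 0 by ring_nf at h3 ⊢; exact h3]; ring
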